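/- Assume g satisfies conditions (A1)–(A4). Then for all w > 0, 1/( max(1,c₃)·(1+g(w)) ) ≤ (1−F(w))/p(w) ≤ min( 1/g(w), 1/c₁ ), and for all w < 0, F(w)/p(w) ≤ min( 1/|g(w)|, 1/c₁ ). -/

import Mathlib

open MeasureTheory Real

/-- Conditions (A1)–(A4) on the function `g`. -/
structure GCond (g : ℝ → ℝ) (c₂ c₃ : ℝ) : Prop where
  diff : Differentiable ℝ g
  mono : Monotone g
  zero : g 0 = 0
  sign : ∀ y : ℝ, y ≠ 0 → 0 < y * g y
  c₂pos : 0 < c₂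
  subadd : ∀ x y : ℝ, |g (x + y)| ≤ c₂ * (|g x| + |g y| + 1)
  c₃ge : 1 ≤ c₃
  derivBound : ∀ y : ℝ, |deriv g y| ≤ c₃ * (1 + |g y|) / (1 + |y|)

/-- `G(y) = ∫₀^y g`. -/
noncomputable def Gfun (g : ℝ → ℝ) (y : ℝ) : ℝ := ∫ t in (0:ℝ)..y, g t

/-- The density `p(y) = c₁ e^{-G(y)}`. -/
noncomputable def pfun (g : ℝ → ℝ) (c₁ y : ℝ) : ℝ := c₁ * Real.exp (-(Gfun g y))

/-- The distribution function `F(w) = ∫_{-∞}^w p`. -/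
noncomputable def Ffun (g : ℝ → ℝ) (c₁ w : ℝ) : ℝ := ∫ y in Set.Iic w, pfun g c₁ y

open Set Filter

section aux
variable {g : ℝ → ℝ} {c₁ c₂ c₃ : ℝ}

lemma hasDerivAt_G (hg : GCond g c₂ c₃) (y : ℝ) : HasDerivAt (Gfun g) (g y) y :=
  intervalIntegral.integral_hasDerivAt_right
    (hg.diff.continuous.intervalIntegrable _ _)
    (hg.diff.continuous.stronglyMeasurableAtFilter _ _)
    hg.diff.continuous.continuousAt

lemma hasDerivAt_p (hg : GCond g c₂ c₃) (c₁ : ℝ) (y : ℝ) :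
    HasDerivAt (pfun g c₁) (-(g y) * pfun g c₁ y) y := by
  have h : HasDerivAt (fun y => c₁ * Real.exp (-(Gfun g y))) (c₁ * (Real.exp (-(Gfun g y)) * -(g y))) y :=
    (((hasDerivAt_G hg y).neg).exp).const_mul c₁
  convert h using 1
  · rfl
  simp [pfun]; ring

lemma p_pos (hc₁ : 0 < c₁) (y : ℝ) : 0 < pfun g c₁ y :=
  mul_pos hc₁ (Real.exp_pos _)

lemma p_cont (hg : GCond g c₂ c₃) : Continuous (pfun g c₁) :=
  continuous_iff_continuousAt.2 fun y => (hasDerivAt_p hg c₁ y).continuousAt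

lemma g_pos (hg : GCond g c₂ c₃) {w : ℝ} (hw : 0 < w) : 0 < g w := by
  nlinarith [hg.sign w hw.ne']

lemma g_neg (hg : GCond g c₂ c₃) {w : ℝ} (hw : w < 0) : g w < 0 := by
  nlinarith [hg.sign w hw.ne]

/-- `G(y) - G(w) ≥ g(w)(y-w)` for `w ≤ y`. -/
lemma G_lb (hg : GCond g c₂ c₃) {w y : ℝ} (h : w ≤ y) :
    g w * (y - w) ≤ Gfun g y - Gfun g w := by
  have h1 : Gfun g y - Gfun g w = ∫ t in w..y, g t := by
    rw [Gfun, Gfun, ← intervalIntegral.integral_add_adjacent_intervals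
      (hg.diff.continuous.intervalIntegrable 0 w) (hg.diff.continuous.intervalIntegrable w y)]
    ring
  rw [h1]
  have h2 : ∫ t in w..y, g w ≤ ∫ t in w..y, g t := by
    apply intervalIntegral.integral_mono_on h
      (intervalIntegrable_const) (hg.diff.continuous.intervalIntegrable w y)
    intro t ht; exact hg.mono ht.1
  simp only [intervalIntegral.integral_const, smul_eq_mul] at h2
  linarith

/-- `G(w) - G(y) ≤ g(w)(w-y)` for `y ≤ w`; i.e. `G y ≥ G w - g w (w - y)`. -/
lemma G_lb' (hg : GCond g c₂ c₃) {w y : ℝ} (h : y ≤ w) :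
    Gfun g w - Gfun g y ≤ g w * (w - y) := by
  have h1 : Gfun g w - Gfun g y = ∫ t in y..w, g t := by
    rw [Gfun, Gfun, ← intervalIntegral.integral_add_adjacent_intervals
      (hg.diff.continuous.intervalIntegrable 0 y) (hg.diff.continuous.intervalIntegrable y w)]
    ring
  rw [h1]
  have h2 : ∫ t in y..w, g t ≤ ∫ t in y..w, g w := by
    apply intervalIntegral.integral_mono_on h
      (hg.diff.continuous.intervalIntegrable y w) intervalIntegrable_const
    intro t ht; exact hg.mono ht.2
  simp only [intervalIntegral.integral_const, smul_eq_mul] at h2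
  linarith

lemma G_nonneg (hg : GCond g c₂ c₃) (y : ℝ) : 0 ≤ Gfun g y := by
  rcases le_or_gt 0 y with h | h
  · have := G_lb hg h
    have h0 : Gfun g 0 = 0 := by simp [Gfun]
    nlinarith [hg.mono h, hg.zero]
  · have := G_lb' hg h.le
    have h0 : Gfun g 0 = 0 := by simp [Gfun]
    nlinarith [g_neg hg h, hg.zero]

lemma G_top (hg : GCond g c₂ c₃) : Tendsto (Gfun g) atTop atTop := by
  have h1 : 0 < g 1 := g_pos hg one_pos
  have hlin : Tendsto (fun y : ℝ => Gfun g 1 + g 1 * (y - 1)) atTop atTop := by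
    apply tendsto_atTop_add_const_left
    exact (tendsto_id.atTop_add tendsto_const_nhds).const_mul_atTop h1
  apply tendsto_atTop_mono' atTop _ hlin
  filter_upwards [eventually_ge_atTop (1:ℝ)] with y hy
  have := G_lb hg hy
  linarith

lemma G_bot (hg : GCond g c₂ c₃) : Tendsto (Gfun g) atBot atTop := by
  have h1 : g (-1) < 0 := g_neg hg (by norm_num)
  have hlin : Tendsto (fun y : ℝ => Gfun g (-1) - g (-1) * (-1 - y)) atBot atTop := by
    have heq : (fun y : ℝ => Gfun g (-1) - g (-1) * (-1 - y))
        = fun y : ℝ => Gfun g (-1) + (-g (-1)) * (-1 + -y) := by funext y; ring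
    rw [heq]
    apply tendsto_atTop_add_const_left
    exact (tendsto_atTop_add_const_left _ _ tendsto_neg_atBot_atTop).const_mul_atTop
      (by linarith)
  apply tendsto_atTop_mono' atBot _ hlin
  filter_upwards [eventually_le_atBot (-1:ℝ)] with y hy
  have := G_lb' (w := -1) hg hy
  linarith

lemma p_top (hg : GCond g c₂ c₃) : Tendsto (pfun g c₁) atTop (nhds 0) := by
  have : Tendsto (fun y => Real.exp (-(Gfun g y))) atTop (nhds 0) :=
    Real.tendsto_exp_atBot.comp (tendsto_neg_atTop_atBot.comp (G_top hg))
  have h := this.const_mul c₁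
  rw [mul_zero] at h
  exact h

lemma p_bot (hg : GCond g c₂ c₃) : Tendsto (pfun g c₁) atBot (nhds 0) := by
  have : Tendsto (fun y => Real.exp (-(Gfun g y))) atBot (nhds 0) :=
    Real.tendsto_exp_atBot.comp (tendsto_neg_atTop_atBot.comp (G_bot hg))
  have h := this.const_mul c₁
  rw [mul_zero] at h
  exact h

end aux

section aux2
variable {g : ℝ → ℝ} {c₁ c₂ c₃ : ℝ}

lemma p_int (hg : GCond g c₂ c₃) (hnorm : (∫ y : ℝ, pfun g c₁ y) = 1) :
    Integrable (pfun g c₁) := by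
  by_contra h
  rw [integral_undef h] at hnorm
  norm_num at hnorm

lemma one_sub_F (hg : GCond g c₂ c₃) (hnorm : (∫ y : ℝ, pfun g c₁ y) = 1) (w : ℝ) :
    1 - Ffun g c₁ w = ∫ y in Set.Ioi w, pfun g c₁ y := by
  have h := intervalIntegral.integral_Iic_add_Ioi (μ := volume) (b := w)
    ((p_int hg hnorm).integrableOn) ((p_int hg hnorm).integrableOn)
  rw [hnorm] at h
  rw [Ffun]; linarith

/-- FTC on `Ioi a` for `a ≥ 0`: `∫_{Ioi a} g·p = p a`, with integrability. -/
lemma gp_int_Ioi (hg : GCond g c₂ c₃) (hc₁ : 0 < c₁) {a : ℝ} (ha : 0 ≤ a) :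
    IntegrableOn (fun y => g y * pfun g c₁ y) (Set.Ioi a) := by
  apply integrableOn_Ioi_deriv_of_nonneg' (g := fun y => -pfun g c₁ y)
    (fun x _ => (hasDerivAt_p hg c₁ x).neg.congr_deriv (by ring))
    (fun x hx => mul_nonneg (hg.mono (le_trans ha hx.out.le) |>.trans_eq' hg.zero)
      (p_pos hc₁ x).le)
    ((p_top hg).neg)

lemma gp_integral_Ioi (hg : GCond g c₂ c₃) (hc₁ : 0 < c₁) {a : ℝ} (ha : 0 ≤ a) :
    ∫ y in Set.Ioi a, g y * pfun g c₁ y = pfun g c₁ a := by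
  have h := integral_Ioi_of_hasDerivAt_of_nonneg' (g := fun y => -pfun g c₁ y)
    (fun x _ => (hasDerivAt_p hg c₁ x).neg.congr_deriv (by ring))
    (fun x hx => mul_nonneg (hg.mono (le_trans ha hx.out.le) |>.trans_eq' hg.zero)
      (p_pos hc₁ x).le)
    ((p_top hg).neg)
  simpa using h

/-- `g(w) (1 - F(w)) ≤ p(w)` for `w > 0`. -/
lemma key_upper (hg : GCond g c₂ c₃) (hc₁ : 0 < c₁)
    (hnorm : (∫ y : ℝ, pfun g c₁ y) = 1) {w : ℝ} (hw : 0 < w) :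
    g w * (1 - Ffun g c₁ w) ≤ pfun g c₁ w := by
  rw [one_sub_F hg hnorm w, ← gp_integral_Ioi hg hc₁ hw.le]
  rw [← MeasureTheory.integral_const_mul]
  apply setIntegral_mono_on
    (((p_int hg hnorm).restrict).const_mul _) (gp_int_Ioi hg hc₁ hw.le) measurableSet_Ioi
  intro y hy
  exact mul_le_mul_of_nonneg_right (hg.mono hy.out.le) (p_pos hc₁ y).le

end aux2

section aux3
variable {g : ℝ → ℝ} {c₁ c₂ c₃ : ℝ}

lemma F_refl (hg : GCond g c₂ c₃) (c₁ : ℝ) (w : ℝ) :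
    Ffun g c₁ w = ∫ x in Set.Ioi (-w), pfun g c₁ (-x) := by
  rw [Ffun, integral_comp_neg_Ioi, neg_neg]

lemma hasDerivAt_p_refl (hg : GCond g c₂ c₃) (c₁ : ℝ) (x : ℝ) :
    HasDerivAt (fun x => -pfun g c₁ (-x)) (-(g (-x)) * pfun g c₁ (-x)) x := by
  have h := ((hasDerivAt_p hg c₁ (-x)).comp x (hasDerivAt_neg x)).neg
  exact h.congr_deriv (by ring)

lemma gp_refl_int_Ioi (hg : GCond g c₂ c₃) (hc₁ : 0 < c₁) {a : ℝ} (ha : a ≤ 0) :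
    IntegrableOn (fun x => -(g (-x)) * pfun g c₁ (-x)) (Set.Ioi (-a)) := by
  apply integrableOn_Ioi_deriv_of_nonneg' (fun x _ => hasDerivAt_p_refl hg c₁ x)
    (fun x hx => mul_nonneg (by
      have : g (-x) ≤ 0 := (hg.mono (by linarith [hx.out] : -x ≤ (0:ℝ))).trans_eq hg.zero
      linarith) (p_pos hc₁ _).le)
    (((p_bot hg).comp tendsto_neg_atTop_atBot).neg)

lemma gp_refl_integral_Ioi (hg : GCond g c₂ c₃) (hc₁ : 0 < c₁) {a : ℝ} (ha : a ≤ 0) :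
    ∫ x in Set.Ioi (-a), -(g (-x)) * pfun g c₁ (-x) = pfun g c₁ a := by
  have h := integral_Ioi_of_hasDerivAt_of_nonneg' (fun x _ => hasDerivAt_p_refl hg c₁ x)
    (fun x hx => mul_nonneg (by
      have : g (-x) ≤ 0 := (hg.mono (by linarith [hx.out] : -x ≤ (0:ℝ))).trans_eq hg.zero
      linarith) (p_pos hc₁ _).le)
    (((p_bot hg).comp tendsto_neg_atTop_atBot).neg) (a := -a)
  simpa using h

/-- `-(g w) F(w) ≤ p(w)` for `w < 0`. -/
lemma key_lower (hg : GCond g c₂ c₃) (hc₁ : 0 < c₁)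
    (hnorm : (∫ y : ℝ, pfun g c₁ y) = 1) {w : ℝ} (hw : w < 0) :
    -(g w) * Ffun g c₁ w ≤ pfun g c₁ w := by
  rw [F_refl hg c₁ w, ← gp_refl_integral_Ioi hg hc₁ hw.le, ← MeasureTheory.integral_const_mul]
  apply setIntegral_mono_on
    ((((p_int hg hnorm).comp_neg).restrict).const_mul _)
    (gp_refl_int_Ioi hg hc₁ hw.le) measurableSet_Ioi
  intro x hx
  apply mul_le_mul_of_nonneg_right _ (p_pos hc₁ _).le
  have : g (-x) ≤ g w := hg.mono (by linarith [hx.out])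
  linarith

lemma hasDerivAt_F (hg : GCond g c₂ c₃) (hc₁ : 0 < c₁)
    (hnorm : (∫ y : ℝ, pfun g c₁ y) = 1) (w : ℝ) :
    HasDerivAt (Ffun g c₁) (pfun g c₁ w) w := by
  have heq : Ffun g c₁ = fun b => Ffun g c₁ 0 + ∫ t in (0:ℝ)..b, pfun g c₁ t := by
    funext b
    have := intervalIntegral.integral_Iic_sub_Iic (μ := volume) (a := (0:ℝ)) (b := b)
      ((p_int hg hnorm).integrableOn) ((p_int hg hnorm).integrableOn)
    simp only [Ffun] at this ⊢
    linarith
  rw [heq]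
  exact ((intervalIntegral.integral_hasDerivAt_right
    ((p_cont hg).intervalIntegrable _ _)
    ((p_cont hg).stronglyMeasurableAtFilter _ _)
    (p_cont hg).continuousAt).const_add _)

lemma F_nonneg (hc₁ : 0 < c₁) (w : ℝ) : 0 ≤ Ffun g c₁ w :=
  setIntegral_nonneg measurableSet_Iic fun y _ => (p_pos hc₁ y).le

lemma one_sub_F_nonneg (hg : GCond g c₂ c₃) (hc₁ : 0 < c₁)
    (hnorm : (∫ y : ℝ, pfun g c₁ y) = 1) (w : ℝ) : 0 ≤ 1 - Ffun g c₁ w := by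
  rw [one_sub_F hg hnorm w]
  exact setIntegral_nonneg measurableSet_Ioi fun y _ => (p_pos hc₁ y).le

end aux3

section aux4
variable {g : ℝ → ℝ} {c₁ c₂ c₃ : ℝ}

lemma hasDerivAt_psi (hg : GCond g c₂ c₃) (hc₁ : 0 < c₁)
    (hnorm : (∫ y : ℝ, pfun g c₁ y) = 1) (y : ℝ) :
    HasDerivAt (fun y => Real.exp (-(Gfun g y)) - (1 - Ffun g c₁ y))
      (Real.exp (-(Gfun g y)) * (c₁ - g y)) y := by
  have h := ((hasDerivAt_G hg y).neg.exp).sub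
    ((hasDerivAt_const y (1:ℝ)).sub (hasDerivAt_F hg hc₁ hnorm y))
  exact h.congr_deriv (by simp [pfun]; ring)

lemma exp_negG_tendsto (hg : GCond g c₂ c₃) :
    Tendsto (fun y => Real.exp (-(Gfun g y))) atTop (nhds 0) :=
  Real.tendsto_exp_atBot.comp (tendsto_neg_atTop_atBot.comp (G_top hg))

lemma one_sub_F_tendsto (hg : GCond g c₂ c₃) (hc₁ : 0 < c₁)
    (hnorm : (∫ y : ℝ, pfun g c₁ y) = 1) :
    Tendsto (fun y => 1 - Ffun g c₁ y) atTop (nhds 0) := by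
  have hg1 : 0 < g 1 := g_pos hg one_pos
  apply tendsto_of_tendsto_of_tendsto_of_le_of_le' (g := fun _ => (0:ℝ))
    (h := fun y => pfun g c₁ y / g 1) tendsto_const_nhds
    (by simpa using (p_top hg (c₁ := c₁)).div_const (g 1))
  · exact Eventually.of_forall fun y => one_sub_F_nonneg hg hc₁ hnorm y
  · filter_upwards [eventually_ge_atTop (1:ℝ)] with y hy
    rw [le_div_iff₀ hg1]
    have h1 := key_upper hg hc₁ hnorm (lt_of_lt_of_le one_pos hy)
    have h2 : g 1 ≤ g y := hg.mono hy
    nlinarith [one_sub_F_nonneg hg hc₁ hnorm y]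

/-- `1 - F(w) ≤ exp(-G(w))` for `w > 0`. -/
lemma psi_nonneg (hg : GCond g c₂ c₃) (hc₁ : 0 < c₁)
    (hnorm : (∫ y : ℝ, pfun g c₁ y) = 1) {w : ℝ} (hw : 0 < w) :
    1 - Ffun g c₁ w ≤ Real.exp (-(Gfun g w)) := by
  set ψ := fun y => Real.exp (-(Gfun g y)) - (1 - Ffun g c₁ y) with hψdef
  have hd := hasDerivAt_psi hg hc₁ hnorm
  have hdiff : Differentiable ℝ ψ := fun y => (hd y).differentiableAt
  suffices h : 0 ≤ ψ w by simpa [hψdef] using h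
  rcases le_or_gt (g w) c₁ with hcase | hcase
  · -- ψ monotone on [0, w]
    have hmono : MonotoneOn ψ (Icc 0 w) := by
      apply monotoneOn_of_deriv_nonneg (convex_Icc 0 w) hdiff.continuous.continuousOn
        hdiff.differentiableOn
      intro y hy
      rw [interior_Icc] at hy
      rw [(hd y).deriv]
      have : g y ≤ g w := hg.mono hy.2.le
      have := Real.exp_pos (-(Gfun g y))
      nlinarith
    have h0 : ψ 0 = Ffun g c₁ 0 := by
      simp [hψdef, Gfun]
    have := hmono (left_mem_Icc.2 hw.le) (right_mem_Icc.2 hw.le) hw.le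
    rw [h0] at this
    linarith [F_nonneg (g := g) hc₁ 0]
  · -- ψ antitone on [w, ∞), tendsto 0
    have hanti : AntitoneOn ψ (Ici w) := by
      apply antitoneOn_of_deriv_nonpos (convex_Ici w) hdiff.continuous.continuousOn
        hdiff.differentiableOn
      intro y hy
      rw [interior_Ici] at hy
      rw [(hd y).deriv]
      have : g w ≤ g y := hg.mono hy.out.le
      have := Real.exp_pos (-(Gfun g y))
      nlinarith
    have hlim : Tendsto ψ atTop (nhds 0) := by
      have := (exp_negG_tendsto hg).sub (one_sub_F_tendsto hg hc₁ hnorm)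
      simpa using this
    apply le_of_tendsto hlim
    filter_upwards [Ici_mem_atTop w] with y hy
    exact hanti self_mem_Ici hy hy.out

end aux4

section aux5
variable {g : ℝ → ℝ} {c₁ c₂ c₃ : ℝ}

lemma hasDerivAt_chi (hg : GCond g c₂ c₃) (hc₁ : 0 < c₁)
    (hnorm : (∫ y : ℝ, pfun g c₁ y) = 1) (y : ℝ) :
    HasDerivAt (fun y => Real.exp (-(Gfun g y)) - Ffun g c₁ y)
      (Real.exp (-(Gfun g y)) * (-(g y) - c₁)) y := by
  have h := ((hasDerivAt_G hg y).neg.exp).sub (hasDerivAt_F hg hc₁ hnorm y)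
  exact h.congr_deriv (by simp [pfun]; ring)

lemma exp_negG_tendsto_bot (hg : GCond g c₂ c₃) :
    Tendsto (fun y => Real.exp (-(Gfun g y))) atBot (nhds 0) :=
  Real.tendsto_exp_atBot.comp (tendsto_neg_atTop_atBot.comp (G_bot hg))

lemma F_tendsto_bot (hg : GCond g c₂ c₃) (hc₁ : 0 < c₁)
    (hnorm : (∫ y : ℝ, pfun g c₁ y) = 1) :
    Tendsto (Ffun g c₁) atBot (nhds 0) := by
  have hg1 : g (-1) < 0 := g_neg hg (by norm_num)
  apply tendsto_of_tendsto_of_tendsto_of_le_of_le' (g := fun _ => (0:ℝ))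
    (h := fun y => pfun g c₁ y / (-(g (-1)))) tendsto_const_nhds
    (by simpa using (p_bot hg (c₁ := c₁)).div_const (-(g (-1))))
  · exact Eventually.of_forall fun y => F_nonneg hc₁ y
  · filter_upwards [eventually_le_atBot (-1:ℝ)] with y hy
    rw [le_div_iff₀ (by linarith)]
    have h1 := key_lower hg hc₁ hnorm (lt_of_le_of_lt hy (by norm_num))
    have h2 : g y ≤ g (-1) := hg.mono hy
    nlinarith [F_nonneg (g := g) hc₁ y]

/-- `F(w) ≤ exp(-G(w))` for `w < 0`. -/
lemma chi_nonneg (hg : GCond g c₂ c₃) (hc₁ : 0 < c₁)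
    (hnorm : (∫ y : ℝ, pfun g c₁ y) = 1) {w : ℝ} (hw : w < 0) :
    Ffun g c₁ w ≤ Real.exp (-(Gfun g w)) := by
  set χ := fun y => Real.exp (-(Gfun g y)) - Ffun g c₁ y with hχdef
  have hd := hasDerivAt_chi hg hc₁ hnorm
  have hdiff : Differentiable ℝ χ := fun y => (hd y).differentiableAt
  suffices h : 0 ≤ χ w by simpa [hχdef] using h
  rcases le_or_gt (-c₁) (g w) with hcase | hcase
  · -- χ antitone on [w, 0]
    have hanti : AntitoneOn χ (Icc w 0) := by
      apply antitoneOn_of_deriv_nonpos (convex_Icc w 0) hdiff.continuous.continuousOn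
        hdiff.differentiableOn
      intro y hy
      rw [interior_Icc] at hy
      rw [(hd y).deriv]
      have : g w ≤ g y := hg.mono hy.1.le
      have := Real.exp_pos (-(Gfun g y))
      nlinarith
    have h0 : χ 0 = 1 - Ffun g c₁ 0 := by simp [hχdef, Gfun]
    have := hanti (left_mem_Icc.2 hw.le) (right_mem_Icc.2 hw.le) hw.le
    rw [h0] at this
    linarith [one_sub_F_nonneg hg hc₁ hnorm 0]
  · -- χ monotone on (-∞, w], tendsto 0 at -∞
    have hmono : MonotoneOn χ (Iic w) := by
      apply monotoneOn_of_deriv_nonneg (convex_Iic w) hdiff.continuous.continuousOn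
        hdiff.differentiableOn
      intro y hy
      rw [interior_Iic] at hy
      rw [(hd y).deriv]
      have : g y ≤ g w := hg.mono hy.out.le
      have := Real.exp_pos (-(Gfun g y))
      nlinarith
    have hlim : Tendsto χ atBot (nhds 0) := by
      have := (exp_negG_tendsto_bot hg).sub (F_tendsto_bot hg hc₁ hnorm)
      simpa using this
    apply le_of_tendsto hlim
    filter_upwards [Iic_mem_atBot w] with y hy
    exact hmono hy self_mem_Iic hy.out

end aux5

section aux6
variable {g : ℝ → ℝ} {c₁ c₂ c₃ : ℝ}

lemma hasDerivAt_h (hg : GCond g c₂ c₃) (hc₃ : 1 ≤ c₃) {y : ℝ} (hy : 0 < 1 + g y) :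
    HasDerivAt (fun y => -(pfun g c₁ y / (c₃ * (1 + g y))))
      (-((-(g y) * pfun g c₁ y * (c₃ * (1 + g y)) - pfun g c₁ y * (c₃ * deriv g y)) /
        (c₃ * (1 + g y)) ^ 2)) y := by
  have hd : HasDerivAt (fun y => c₃ * (1 + g y)) (c₃ * deriv g y) y :=
    ((hg.diff y).hasDerivAt.const_add 1).const_mul c₃
  have hne : c₃ * (1 + g y) ≠ 0 := by positivity
  exact ((hasDerivAt_p hg c₁ y).div hd hne).neg

lemma deriv_g_nonneg (hg : GCond g c₂ c₃) (y : ℝ) : 0 ≤ deriv g y := by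
  have h := (hg.diff y).hasDerivAt
  rw [hasDerivAt_iff_tendsto_slope] at h
  have h2 : Tendsto (slope g y) (nhdsWithin y (Set.Ioi y)) (nhds (deriv g y)) :=
    h.mono_left (nhdsWithin_mono y fun z hz => ne_of_gt hz)
  apply ge_of_tendsto h2
  filter_upwards [self_mem_nhdsWithin] with z hz
  rw [slope_def_field]
  have h3 : g y ≤ g z := hg.mono (le_of_lt hz)
  have h4 : y < z := hz
  exact div_nonneg (by linarith) (by linarith)

end aux6

section aux7
variable {g : ℝ → ℝ} {c₁ c₂ c₃ : ℝ}

/-- The (negative of the) derivative of `h` is nonneg and `≤ p` on `Ioi w`, `w > 0`. -/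
lemma hprime_nonneg (hg : GCond g c₂ c₃) (hc₁ : 0 < c₁) {w y : ℝ} (hw : 0 < w) (hy : w < y) :
    0 ≤ -((-(g y) * pfun g c₁ y * (c₃ * (1 + g y)) - pfun g c₁ y * (c₃ * deriv g y)) /
        (c₃ * (1 + g y)) ^ 2) := by
  have hgy : 0 < g y := g_pos hg (hw.trans hy)
  have hp := p_pos (g := g) hc₁ y
  have hc₃ : (1:ℝ) ≤ c₃ := hg.c₃ge
  have hd := deriv_g_nonneg hg y
  have hnum : 0 ≤ g y * pfun g c₁ y * (c₃ * (1 + g y)) + pfun g c₁ y * (c₃ * deriv g y) := by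
    positivity
  have hA : -(g y) * pfun g c₁ y * (c₃ * (1 + g y)) - pfun g c₁ y * (c₃ * deriv g y) ≤ 0 := by
    nlinarith
  exact neg_nonneg.2 (div_nonpos_of_nonpos_of_nonneg hA (sq_nonneg _))

lemma hprime_le_p (hg : GCond g c₂ c₃) (hc₁ : 0 < c₁) {w y : ℝ} (hw : 0 < w) (hy : w < y) :
    -((-(g y) * pfun g c₁ y * (c₃ * (1 + g y)) - pfun g c₁ y * (c₃ * deriv g y)) /
        (c₃ * (1 + g y)) ^ 2) ≤ pfun g c₁ y := by
  have hgy : 0 < g y := g_pos hg (hw.trans hy)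
  have hp := p_pos (g := g) hc₁ y
  have hc₃ : (1:ℝ) ≤ c₃ := hg.c₃ge
  have hd := deriv_g_nonneg hg y
  have hdb : deriv g y ≤ c₃ * (1 + g y) := by
    have h1 := hg.derivBound y
    have h2 : |deriv g y| ≤ c₃ * (1 + |g y|) / (1 + |y|) := h1
    have h3 : (1:ℝ) ≤ 1 + |y| := by linarith [abs_nonneg y]
    have h4 : deriv g y ≤ c₃ * (1 + |g y|) / (1 + |y|) := (le_abs_self _).trans h2
    have h5 : c₃ * (1 + |g y|) / (1 + |y|) ≤ c₃ * (1 + |g y|) := by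
      apply div_le_self (by positivity) h3
    rw [abs_of_pos hgy] at h4 h5
    linarith
  rw [← neg_div, div_le_iff₀ (by positivity)]
  have hg1 : (0:ℝ) < 1 + g y := by linarith
  calc -(-(g y) * pfun g c₁ y * (c₃ * (1 + g y)) - pfun g c₁ y * (c₃ * deriv g y))
      = pfun g c₁ y * c₃ * ((1 + g y) * g y + deriv g y) := by ring
    _ ≤ pfun g c₁ y * c₃ * ((1 + g y) * g y + c₃ * (1 + g y)) := by
        apply mul_le_mul_of_nonneg_left (by linarith) (by positivity)
    _ = (pfun g c₁ y * c₃ * (1 + g y)) * (g y + c₃) := by ring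
    _ ≤ (pfun g c₁ y * c₃ * (1 + g y)) * (c₃ * (1 + g y)) := by
        apply mul_le_mul_of_nonneg_left (by nlinarith) (by positivity)
    _ = pfun g c₁ y * (c₃ * (1 + g y)) ^ 2 := by ring

end aux7

section aux8
variable {g : ℝ → ℝ} {c₁ c₂ c₃ : ℝ}

lemma lower_bound (hg : GCond g c₂ c₃) (hc₁ : 0 < c₁)
    (hnorm : (∫ y : ℝ, pfun g c₁ y) = 1) {w : ℝ} (hw : 0 < w) :
    pfun g c₁ w / (c₃ * (1 + g w)) ≤ 1 - Ffun g c₁ w := by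
  have hgw : 0 < g w := g_pos hg hw
  have hc₃ : (1:ℝ) ≤ c₃ := hg.c₃ge
  set f' := fun y => -((-(g y) * pfun g c₁ y * (c₃ * (1 + g y)) -
      pfun g c₁ y * (c₃ * deriv g y)) / (c₃ * (1 + g y)) ^ 2) with hf'def
  have hderiv : ∀ x ∈ Ici w, HasDerivAt (fun y => -(pfun g c₁ y / (c₃ * (1 + g y)))) (f' x) x := by
    intro x hx
    have hgx : g w ≤ g x := hg.mono hx.out
    exact hasDerivAt_h hg hc₃ (by linarith)
  have htends : Tendsto (fun y => -(pfun g c₁ y / (c₃ * (1 + g y)))) atTop (nhds 0) := by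
    apply tendsto_of_tendsto_of_tendsto_of_le_of_le' (g := fun y => -(pfun g c₁ y / c₃))
      (h := fun _ => (0:ℝ))
      (by simpa using ((p_top hg (c₁ := c₁)).div_const c₃).neg) tendsto_const_nhds
    · filter_upwards [eventually_ge_atTop w] with y hy
      have hgy : 0 < g y := g_pos hg (lt_of_lt_of_le hw hy)
      have hp := p_pos (g := g) hc₁ y
      have : pfun g c₁ y / (c₃ * (1 + g y)) ≤ pfun g c₁ y / c₃ :=
        div_le_div_of_nonneg_left hp.le (by linarith) (by nlinarith)
      linarith
    · filter_upwards [eventually_ge_atTop w] with y hy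
      have hgy : 0 < g y := g_pos hg (lt_of_lt_of_le hw hy)
      have hp := p_pos (g := g) hc₁ y
      have : 0 < pfun g c₁ y / (c₃ * (1 + g y)) := by positivity
      linarith
  have hpos : ∀ x ∈ Ioi w, 0 ≤ f' x := fun x hx => hprime_nonneg hg hc₁ hw hx.out
  have hint := integral_Ioi_of_hasDerivAt_of_nonneg' hderiv hpos htends
  have hint2 : IntegrableOn f' (Ioi w) :=
    integrableOn_Ioi_deriv_of_nonneg' hderiv hpos htends
  rw [one_sub_F hg hnorm w]
  have hle : ∫ x in Ioi w, f' x ≤ ∫ y in Ioi w, pfun g c₁ y := by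
    apply setIntegral_mono_on hint2 ((p_int hg hnorm).restrict) measurableSet_Ioi
    intro y hy
    exact hprime_le_p hg hc₁ hw hy.out
  rw [hint] at hle
  simpa using hle

end aux8

theorem stmt_7 (g : ℝ → ℝ) (c₁ c₂ c₃ : ℝ) (hg : GCond g c₂ c₃)
    (hc₁ : 0 < c₁)
    (hnorm : (∫ y : ℝ, pfun g c₁ y) = 1) :
    (∀ w : ℝ, 0 < w →
      1 / (max 1 c₃ * (1 + g w)) ≤ (1 - Ffun g c₁ w) / pfun g c₁ w ∧
      (1 - Ffun g c₁ w) / pfun g c₁ w ≤ min (1 / g w) (1 / c₁)) ∧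
    (∀ w : ℝ, w < 0 →
      Ffun g c₁ w / pfun g c₁ w ≤ min (1 / |g w|) (1 / c₁)) := by
  constructor
  · intro w hw
    have hgw : 0 < g w := g_pos hg hw
    have hP : 0 < pfun g c₁ w := p_pos hc₁ w
    have hc₃ : (1:ℝ) ≤ c₃ := hg.c₃ge
    have hmax : max 1 c₃ = c₃ := max_eq_right hc₃
    constructor
    · rw [hmax, div_le_div_iff₀ (by nlinarith) hP]
      have h := lower_bound hg hc₁ hnorm hw
      rw [div_le_iff₀ (by nlinarith)] at h
      linarith
    · apply le_min
      · rw [div_le_div_iff₀ hP hgw]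
        have h := key_upper hg hc₁ hnorm hw
        linarith
      · rw [div_le_div_iff₀ hP hc₁]
        have h := psi_nonneg hg hc₁ hnorm hw
        have : c₁ * (1 - Ffun g c₁ w) ≤ c₁ * Real.exp (-(Gfun g w)) :=
          mul_le_mul_of_nonneg_left h hc₁.le
        rw [pfun]
        linarith
  · intro w hw
    have hgw : g w < 0 := g_neg hg hw
    have hP : 0 < pfun g c₁ w := p_pos hc₁ w
    have habs : |g w| = -(g w) := abs_of_neg hgw
    apply le_min
    · rw [habs, div_le_div_iff₀ hP (by linarith)]
      have h := key_lower hg hc₁ hnorm hw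
      linarith
    · rw [div_le_div_iff₀ hP hc₁]
      have h := chi_nonneg hg hc₁ hnorm hw
      have : c₁ * Ffun g c₁ w ≤ c₁ * Real.exp (-(Gfun g w)) :=
        mul_le_mul_of_nonneg_left h hc₁.le
      rw [pfun]
      linarith
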